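/- Let C > 0, D ≥ 0, T > 0, let h : ℝ → ℝ be continuous and nonnegative, and let u : ℝ → ℝ be differentiable and nonnegative with u(0) = 0 and |u'(t)| ≤ C·∫₀ᵗ h(τ) dτ + (D/2)·u(t) for all t ∈ [0,T]. Then u(t) ≤ C e^{DT/2} ∫₀ᵗ (t − τ) h(τ) dτ for all t ∈ [0,T]. -/

import Mathlib

/-- One iteration step of the Picard-type scheme for a symmetric hyperbolic system with a
retarded nonlocal potential: from `u(0) = 0` and
`|u'(t)| ≤ C ∫₀ᵗ h + (D/2) u(t)` on `[0,T]` one obtains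
`u(t) ≤ C e^{DT/2} ∫₀ᵗ (t-τ) h(τ) dτ`. -/
theorem retarded_iteration_step (C D T : ℝ) (hC : 0 < C) (hD : 0 ≤ D) (hT : 0 < T)
    (h u : ℝ → ℝ) (hh : Continuous h) (hh0 : ∀ t, 0 ≤ h t)
    (hu : Differentiable ℝ u) (hu0 : ∀ t, 0 ≤ u t) (hu00 : u 0 = 0)
    (hub : ∀ t ∈ Set.Icc (0 : ℝ) T,
      |deriv u t| ≤ C * (∫ τ in (0 : ℝ)..t, h τ) + (D / 2) * u t) :
    ∀ t ∈ Set.Icc (0 : ℝ) T,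
      u t ≤ C * Real.exp (D * T / 2) * ∫ τ in (0 : ℝ)..t, (t - τ) * h τ := by
  set g : ℝ → ℝ := fun t => ∫ τ in (0 : ℝ)..t, h τ with hgdef
  have hg : ∀ t : ℝ, HasDerivAt g (h t) t := fun t =>
    (hh.integral_hasStrictDerivAt 0 t).hasDerivAt
  have hgdiff : Differentiable ℝ g := fun t => (hg t).differentiableAt
  have hgcont : Continuous g := hgdiff.continuous
  have hgnonneg : ∀ t : ℝ, 0 ≤ t → 0 ≤ g t := fun t ht =>
    intervalIntegral.integral_nonneg ht fun τ _ => hh0 τ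
  set F : ℝ → ℝ := fun t => ∫ s in (0 : ℝ)..t, g s with hFdef
  have hF : ∀ t : ℝ, HasDerivAt F (g t) t := fun t =>
    (hgcont.integral_hasStrictDerivAt 0 t).hasDerivAt
  have hFnonneg : ∀ t : ℝ, 0 ≤ t → 0 ≤ F t := fun t ht =>
    intervalIntegral.integral_nonneg ht fun s hs => hgnonneg s hs.1
  have hτh : Continuous fun τ : ℝ => τ * h τ := continuous_id.mul hh
  -- Step A : ∫₀ᵗ (t - τ) h τ dτ = F t
  have stepA : ∀ t : ℝ, (∫ τ in (0 : ℝ)..t, (t - τ) * h τ) = F t := by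
    intro t
    have split : (∫ τ in (0 : ℝ)..t, (t - τ) * h τ)
        = t * g t - ∫ τ in (0 : ℝ)..t, τ * h τ := by
      have e : ∀ τ : ℝ, (t - τ) * h τ = t * h τ - τ * h τ := fun τ => by ring
      simp_rw [e]
      rw [intervalIntegral.integral_sub ((hh.intervalIntegrable _ _).const_mul t)
        (hτh.intervalIntegrable _ _), intervalIntegral.integral_const_mul]
    rw [split]
    set P : ℝ → ℝ := fun s => s * g s - (∫ τ in (0 : ℝ)..s, τ * h τ) - F s with hPdef
    have hPderiv : ∀ x : ℝ, HasDerivAt P 0 x := by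
      intro x
      have h1 : HasDerivAt (fun s : ℝ => s * g s) (1 * g x + x * h x) x :=
        (hasDerivAt_id x).mul (hg x)
      have h2 : HasDerivAt (fun s : ℝ => ∫ τ in (0 : ℝ)..s, τ * h τ) (x * h x) x :=
        (hτh.integral_hasStrictDerivAt 0 x).hasDerivAt
      have h3 := (h1.sub h2).sub (hF x)
      have : 1 * g x + x * h x - x * h x - g x = 0 := by ring
      rw [this] at h3
      exact h3
    have hPconst : P t = P 0 :=
      is_const_of_deriv_eq_zero (fun y => (hPderiv y).differentiableAt)
        (fun y => (hPderiv y).deriv) t 0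
    have hP0 : P 0 = 0 := by simp [hPdef, hFdef, hgdef]
    have := hPconst.trans hP0
    simp only [hPdef] at this
    linarith
  -- Step B : Grönwall
  set v : ℝ → ℝ := fun t => Real.exp (-(D / 2) * t) * u t with hvdef
  have hvderiv : ∀ t : ℝ,
      HasDerivAt v (Real.exp (-(D / 2) * t) * (deriv u t - D / 2 * u t)) t := by
    intro t
    have he : HasDerivAt (fun s : ℝ => Real.exp (-(D / 2) * s))
        (-(D / 2) * Real.exp (-(D / 2) * t)) t := by
      have h0 : HasDerivAt (fun s : ℝ => -(D / 2) * s) (-(D / 2)) t := by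
        simpa using (hasDerivAt_id t).const_mul (-(D / 2))
      simpa [Function.comp_def, mul_comm] using (Real.hasDerivAt_exp (-(D / 2) * t)).comp t h0
    have : HasDerivAt (fun s : ℝ => Real.exp (-(D / 2) * s) * u s)
        (-(D / 2) * Real.exp (-(D / 2) * t) * u t + Real.exp (-(D / 2) * t) * deriv u t) t :=
      he.mul (hu t).hasDerivAt
    convert this using 1
    ring
  set w : ℝ → ℝ := fun t => v t - C * F t with hwdef
  have hwderiv : ∀ t : ℝ, HasDerivAt w
      (Real.exp (-(D / 2) * t) * (deriv u t - D / 2 * u t) - C * g t) t :=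
    fun t => (hvderiv t).sub ((hF t).const_mul C)
  have hwdiff : Differentiable ℝ w := fun t => (hwderiv t).differentiableAt
  have hwanti : AntitoneOn w (Set.Icc 0 T) := by
    apply antitoneOn_of_deriv_nonpos (convex_Icc 0 T) hwdiff.continuous.continuousOn
      hwdiff.differentiableOn
    intro x hx
    rw [interior_Icc] at hx
    rw [(hwderiv x).deriv]
    have hx' : x ∈ Set.Icc (0 : ℝ) T := ⟨hx.1.le, hx.2.le⟩
    have hb := le_of_abs_le (hub x hx')
    have h1 : deriv u x - D / 2 * u x ≤ C * g x := by linarith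
    have hCg : 0 ≤ C * g x := mul_nonneg hC.le (hgnonneg x hx.1.le)
    have hexple : Real.exp (-(D / 2) * x) ≤ 1 := by
      apply Real.exp_le_one_iff.2
      nlinarith [hx.1]
    have hexppos : (0 : ℝ) < Real.exp (-(D / 2) * x) := Real.exp_pos _
    nlinarith [mul_le_mul_of_nonneg_left h1 hexppos.le]
  intro t ht
  have hw0 : w 0 = 0 := by simp [hwdef, hvdef, hFdef, hu00]
  have hwt : w t ≤ 0 := by
    have := hwanti (Set.left_mem_Icc.2 hT.le) ht ht.1
    rwa [hw0] at this
  have hvle : v t ≤ C * F t := by simp only [hwdef] at hwt; linarith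
  have hut : u t = Real.exp (D / 2 * t) * v t := by
    simp only [hvdef]
    rw [← mul_assoc, ← Real.exp_add]
    have : D / 2 * t + -(D / 2) * t = 0 := by ring
    rw [this, Real.exp_zero, one_mul]
  have hCF : 0 ≤ C * F t := mul_nonneg hC.le (hFnonneg t ht.1)
  have hexpmono : Real.exp (D / 2 * t) ≤ Real.exp (D * T / 2) := by
    apply Real.exp_le_exp.2
    nlinarith [ht.2, ht.1]
  calc u t = Real.exp (D / 2 * t) * v t := hut
    _ ≤ Real.exp (D / 2 * t) * (C * F t) :=
        mul_le_mul_of_nonneg_left hvle (Real.exp_pos _).le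
    _ ≤ Real.exp (D * T / 2) * (C * F t) := mul_le_mul_of_nonneg_right hexpmono hCF
    _ = C * Real.exp (D * T / 2) * ∫ τ in (0 : ℝ)..t, (t - τ) * h τ := by
        rw [stepA t]; ring
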